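/- Let J ⊂ S be a quasi-stable monomial ideal with Pommaret basis P(J) = {x^{α(1)},…,x^{α(m)}} and G = {f_{α(1)},…,f_{α(m)}} a P(J)-marked basis. Let S = Σ_{l=1}^m S_l e_l (S_l ∈ S) be a syzygy of G, i.e. Σ_{l=1}^m S_l f_{α(l)} = 0. Then every S_l is a polynomial only in the multiplicative variables of x^{α(l)} if and only if S = 0. -/

import Mathlib

open MvPolynomial

namespace MB

/-- Exponent (multi-index) of a term in the variables `x_0, …, x_n`. -/
abbrev Exp (n : ℕ) := Fin (n+1) →₀ ℕ

variable {n : ℕ}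

/-- Total degree of a term. -/
def degE (α : Exp n) : ℕ := α.sum fun _ e => e

/-- `x_i` is a multiplicative variable for the term `x^α`, i.e. `x_i ≤ min(x^α)`. -/
def mult (α : Exp n) (i : Fin (n+1)) : Prop := ∀ j ∈ α.support, i ≤ j

/-- Every variable occurring in `x^δ` is multiplicative for `x^α`. -/
def multExp (α δ : Exp n) : Prop := ∀ i ∈ δ.support, mult α i

/-- Pommaret cone of a term. -/
def pommaretCone (α : Exp n) : Set (Exp n) := {γ | ∃ δ, multExp α δ ∧ γ = α + δ}

/-- A set of terms is (the set of terms of) a monomial ideal. -/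
def IsMonomialIdeal (T : Set (Exp n)) : Prop := ∀ α ∈ T, ∀ β, α + β ∈ T

/-- `P` is a Pommaret basis of the set of terms `T`: the terms of `T` are the
disjoint union of the Pommaret cones of the elements of `P`. -/
def IsPommaretBasis (P : Finset (Exp n)) (T : Set (Exp n)) : Prop :=
  (∀ γ, γ ∈ T ↔ ∃ α ∈ P, γ ∈ pommaretCone α) ∧
  ∀ γ : Exp n, ∀ α ∈ P, ∀ β ∈ P, γ ∈ pommaretCone α → γ ∈ pommaretCone β → α = β

/-- Lexicographic order on terms (with `x_n > … > x_0` significance). -/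
def lexLt (η δ : Exp n) : Prop := ∃ i, η i < δ i ∧ ∀ j, i < j → η j = δ j

/-- Terms of the saturation `(J : (x_0,…,x_n)^∞)` of a monomial ideal. -/
def satTerms (T : Set (Exp n)) : Set (Exp n) :=
  {α | ∃ j : ℕ, ∀ β : Exp n, degE β = j → α + β ∈ T}

section ModuleDefs

variable (A : Type*) [CommRing A] {κ : Type*} [Fintype κ] [DecidableEq κ]

/-- The term `x^α e_k` of the free module. -/
noncomputable def termV (α : Exp n) (k : κ) : κ → MvPolynomial (Fin (n+1)) A :=
  Pi.single k (monomial α 1)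

variable {A}

/-- Homogeneity of degree `s` in `S^m_d` (with weight vector `d`). -/
def IsHomogV (d : κ → ℤ) (f : κ → MvPolynomial (Fin (n+1)) A) (s : ℤ) : Prop :=
  ∀ k, ∀ β ∈ (f k).support, (degE β : ℤ) + d k = s

variable (A)

/-- The degree-`s` component `(S^m_d)_s` as an `A`-submodule. -/
noncomputable def homogCompV (d : κ → ℤ) (s : ℤ) :
    Submodule A (κ → MvPolynomial (Fin (n+1)) A) where
  carrier := {f | IsHomogV d f s}
  add_mem' := by
    intro f g hf hg k β hβ
    rcases Finset.mem_union.mp (MvPolynomial.support_add hβ) with h | h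
    · exact hf k β h
    · exact hg k β h
  zero_mem' := by intro k β hβ; simp at hβ
  smul_mem' := by
    intro a f hf k β hβ
    exact hf k β (MvPolynomial.support_smul hβ)

/-- The set `N(U)` of terms of `S^m_d` not belonging to the monomial module `U = ⊕ J^(k) e_k`. -/
def NUTerms (J : κ → Set (Exp n)) : Set (κ → MvPolynomial (Fin (n+1)) A) :=
  {v | ∃ k, ∃ α, α ∉ J k ∧ v = termV A α k}

/-- The degree-`s` part `N(U)_s`. -/
def NUTermsDeg (d : κ → ℤ) (J : κ → Set (Exp n)) (s : ℤ) :
    Set (κ → MvPolynomial (Fin (n+1)) A) :=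
  {v | ∃ k, ∃ α, α ∉ J k ∧ (degE α : ℤ) + d k = s ∧ v = termV A α k}

variable {A}

/-- A `P(U)`-marked set: for each `x^α e_k` with `α ∈ P k`, the element `g α k` has
head term `x^α e_k` (coefficient `1`) and all other terms in `N(U)` of the same degree. -/
def IsMarkedSetV (d : κ → ℤ) (J : κ → Set (Exp n)) (P : κ → Finset (Exp n))
    (g : Exp n → κ → (κ → MvPolynomial (Fin (n+1)) A)) : Prop :=
  ∀ k, ∀ α ∈ P k, ∀ l, ∀ β ∈ ((g α k - termV A α k) l).support,
    β ∉ J l ∧ (degE β : ℤ) + d l = (degE α : ℤ) + d k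

/-- The underlying set of elements of the marked set `G`. -/
def GSet (P : κ → Finset (Exp n)) (g : Exp n → κ → (κ → MvPolynomial (Fin (n+1)) A)) :
    Set (κ → MvPolynomial (Fin (n+1)) A) :=
  {v | ∃ k, ∃ α ∈ P k, v = g α k}

/-- The set `G^(s)` of multiplicative multiples of elements of `G` of degree `s`. -/
def GSdeg (d : κ → ℤ) (P : κ → Finset (Exp n))
    (g : Exp n → κ → (κ → MvPolynomial (Fin (n+1)) A)) (s : ℤ) :
    Set (κ → MvPolynomial (Fin (n+1)) A) :=
  {v | ∃ k, ∃ α ∈ P k, ∃ δ : Exp n, multExp α δ ∧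
    (degE δ : ℤ) + (degE α : ℤ) + d k = s ∧ v = (monomial δ (1:A)) • g α k}

/-- The `S`-submodule `⟨G⟩` generated by the marked set. -/
noncomputable def GmodS (P : κ → Finset (Exp n))
    (g : Exp n → κ → (κ → MvPolynomial (Fin (n+1)) A)) :
    Submodule (MvPolynomial (Fin (n+1)) A) (κ → MvPolynomial (Fin (n+1)) A) :=
  Submodule.span _ (GSet P g)

/-- The degree-`s` component `⟨G⟩_s` as an `A`-submodule. -/
noncomputable def GmodDeg (d : κ → ℤ) (P : κ → Finset (Exp n))
    (g : Exp n → κ → (κ → MvPolynomial (Fin (n+1)) A)) (s : ℤ) :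
    Submodule A (κ → MvPolynomial (Fin (n+1)) A) :=
  (GmodS P g).restrictScalars A ⊓ homogCompV A d s

/-- `G` is a marked basis: `(S^m_d)_s = ⟨G⟩_s ⊕ ⟨N(U)_s⟩^A` for every degree `s`. -/
def MarkedBasisProp (d : κ → ℤ) (J : κ → Set (Exp n)) (P : κ → Finset (Exp n))
    (g : Exp n → κ → (κ → MvPolynomial (Fin (n+1)) A)) : Prop :=
  ∀ s : ℤ,
    homogCompV A d s = GmodDeg d P g s ⊔ Submodule.span A (NUTermsDeg A d J s) ∧
    GmodDeg d P g s ⊓ Submodule.span A (NUTermsDeg A d J s) = ⊥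

/-- One step of the reduction relation `→_G`. -/
def RedStep (P : κ → Finset (Exp n)) (g : Exp n → κ → (κ → MvPolynomial (Fin (n+1)) A))
    (h h' : κ → MvPolynomial (Fin (n+1)) A) : Prop :=
  ∃ k, ∃ α ∈ P k, ∃ η : Exp n, multExp α η ∧
    (h k).coeff (η + α) ≠ 0 ∧
    h' = h - ((h k).coeff (η + α)) • ((monomial η (1:A)) • g α k)

end ModuleDefs

section IdealDefs

variable {A : Type*} [CommRing A]

/-- A `P(J)`-marked set of polynomials. -/
def IsMarkedSetI (T : Set (Exp n)) (P : Finset (Exp n))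
    (g : Exp n → MvPolynomial (Fin (n+1)) A) : Prop :=
  ∀ α ∈ P, ∀ β ∈ (g α - monomial α (1:A)).support, β ∉ T ∧ degE β = degE α

variable (A)

/-- The degree-`s` monomials not in `T`. -/
def NTermsDegI (T : Set (Exp n)) (s : ℕ) : Set (MvPolynomial (Fin (n+1)) A) :=
  {p | ∃ β, β ∉ T ∧ degE β = s ∧ p = monomial β (1:A)}

variable {A}

/-- Degree-`s` part of the ideal generated by the marked set. -/
noncomputable def IdealDegI (P : Finset (Exp n)) (g : Exp n → MvPolynomial (Fin (n+1)) A)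
    (s : ℕ) : Submodule A (MvPolynomial (Fin (n+1)) A) :=
  (Ideal.span (g '' ↑P)).restrictScalars A ⊓ homogeneousSubmodule (Fin (n+1)) A s

/-- A `P(J)`-marked basis of polynomials: `S_s = (G)_s ⊕ ⟨N(J)_s⟩^A` for all `s`. -/
def IsMarkedBasisI (T : Set (Exp n)) (P : Finset (Exp n))
    (g : Exp n → MvPolynomial (Fin (n+1)) A) : Prop :=
  IsMarkedSetI T P g ∧ ∀ s : ℕ,
    homogeneousSubmodule (Fin (n+1)) A s
      = IdealDegI P g s ⊔ Submodule.span A (NTermsDegI A T s) ∧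
    IdealDegI P g s ⊓ Submodule.span A (NTermsDegI A T s) = ⊥

/-- The polynomial `p` involves only multiplicative variables of `x^α`. -/
def multPoly (α : Exp n) (p : MvPolynomial (Fin (n+1)) A) : Prop :=
  ∀ β ∈ p.support, multExp α β

end IdealDefs

section SyzDefs

variable {A : Type*} [CommRing A]

/-- The map `(c_l) ↦ Σ_l c_l f_{α(l)}` whose kernel is `Syz(G)`. -/
noncomputable def syzMap (P : Finset (Exp n)) (g : Exp n → MvPolynomial (Fin (n+1)) A) :
    (↥P → MvPolynomial (Fin (n+1)) A) →ₗ[MvPolynomial (Fin (n+1)) A]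
      MvPolynomial (Fin (n+1)) A where
  toFun c := ∑ l : ↥P, c l * g l.1
  map_add' c c' := by simp [add_mul, Finset.sum_add_distrib]
  map_smul' a c := by simp [Finset.mul_sum, mul_assoc]

/-- Weight vector for the syzygy module: `d_l = deg x^{α(l)}`. -/
def ddeg (P : Finset (Exp n)) : ↥P → ℤ := fun l => (degE l.1 : ℤ)

/-- Terms of the monomial ideal generated by the nonmultiplicative variables of `x^{α(l)}`. -/
def Jsyz (P : Finset (Exp n)) : ↥P → Set (Exp n) :=
  fun l => {β | ∃ i ∈ β.support, ¬ mult (l : Exp n) i}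

open Classical in
/-- The claimed Pommaret basis `{x_i e_l : x_i nonmultiplicative for x^{α(l)}}`. -/
noncomputable def Psyz (P : Finset (Exp n)) : ↥P → Finset (Exp n) := fun l =>
  (Finset.univ.filter fun i : Fin (n+1) => ¬ mult (l : Exp n) i).image
    fun i => Finsupp.single i 1

open Classical in
/-- The syzygy `S_{k;i} = x_i e_k − Σ_l P_l^{k;i} e_l`. -/
noncomputable def Ssyz (P : Finset (Exp n))
    (Pc : ↥P → Fin (n+1) → ↥P → MvPolynomial (Fin (n+1)) A)
    (k : ↥P) (i : Fin (n+1)) : ↥P → MvPolynomial (Fin (n+1)) A :=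
  fun l => (if l = k then (X i : MvPolynomial (Fin (n+1)) A) else 0) - Pc k i l

/-- The set `G_Syz^(s)`. -/
def GSyzDeg (P : Finset (Exp n))
    (Pc : ↥P → Fin (n+1) → ↥P → MvPolynomial (Fin (n+1)) A) (s : ℤ) :
    Set (↥P → MvPolynomial (Fin (n+1)) A) :=
  {v | ∃ k : ↥P, ∃ i : Fin (n+1), ¬ mult (k : Exp n) i ∧ ∃ δ : Exp n,
    (∀ j ∈ δ.support, j ≤ i) ∧ (degE δ : ℤ) + 1 + ddeg P k = s ∧
    v = (monomial δ (1:A)) • Ssyz P Pc k i}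

end SyzDefs

section Aux

variable {n : ℕ}

lemma lexLt_irrefl (a : Exp n) : ¬ lexLt a a := by
  rintro ⟨i, hi, -⟩; exact lt_irrefl _ hi

lemma lexLt_trans {a b c : Exp n} (h1 : lexLt a b) (h2 : lexLt b c) : lexLt a c := by
  obtain ⟨i, hi, hia⟩ := h1
  obtain ⟨i', hi', hi'a⟩ := h2
  rcases lt_trichotomy i i' with h | rfl | h
  · exact ⟨i', by rw [hia i' h]; exact hi', fun j hj => (hia j (h.trans hj)).trans (hi'a j hj)⟩
  · exact ⟨i, hi.trans hi', fun j hj => (hia j hj).trans (hi'a j hj)⟩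
  · exact ⟨i, by rw [← hi'a i h]; exact hi, fun j hj => (hia j hj).trans (hi'a j (h.trans hj))⟩

lemma lexLt_trichot (η δ : Exp n) : η = δ ∨ lexLt η δ ∨ lexLt δ η := by
  classical
  by_cases h : η = δ
  · exact Or.inl h
  · right
    have hne : ∃ j, η j ≠ δ j := by
      by_contra hc
      push_neg at hc
      exact h (Finsupp.ext hc)
    set D : Finset (Fin (n+1)) := Finset.univ.filter (fun j => η j ≠ δ j) with hD
    have hDne : D.Nonempty := by
      obtain ⟨j, hj⟩ := hne
      exact ⟨j, by simp [hD, hj]⟩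
    set i := D.max' hDne with hi
    have hiD : i ∈ D := D.max'_mem hDne
    have hine : η i ≠ δ i := by simpa [hD] using hiD
    have habove : ∀ j, i < j → η j = δ j := by
      intro j hj
      by_contra hc
      have : j ∈ D := by simp [hD, hc]
      exact absurd (D.le_max' j this) (not_le.mpr hj)
    rcases lt_or_gt_of_ne hine with hlt | hgt
    · exact Or.inl ⟨i, hlt, habove⟩
    · exact Or.inr ⟨i, hgt, fun j hj => (habove j hj).symm⟩

lemma exists_lex_max : ∀ s : Finset (Exp n), s.Nonempty → ∃ m ∈ s, ∀ b ∈ s, ¬ lexLt m b := by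
  classical
  intro s
  induction s using Finset.induction_on with
  | empty => intro h; exact absurd h (by simp)
  | @insert a s ha ih =>
    intro _
    rcases s.eq_empty_or_nonempty with rfl | hne
    · refine ⟨a, Finset.mem_insert_self a _, ?_⟩
      intro b hb
      rcases Finset.mem_insert.mp hb with heq | hb
      · exact heq ▸ lexLt_irrefl a
      · simp at hb
    · obtain ⟨m, hm, hmax⟩ := ih hne
      rcases lexLt_trichot a m with heq | ham | hma
      · refine ⟨m, Finset.mem_insert_of_mem hm, ?_⟩
        intro b hb
        rcases Finset.mem_insert.mp hb with heq2 | hb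
        · rw [heq2, ← heq]
          exact heq ▸ lexLt_irrefl a
        · exact hmax b hb
      · refine ⟨m, Finset.mem_insert_of_mem hm, ?_⟩
        intro b hb
        rcases Finset.mem_insert.mp hb with heq2 | hb
        · rw [heq2]
          exact fun hmb => lexLt_irrefl m (lexLt_trans hmb ham)
        · exact hmax b hb
      · refine ⟨a, Finset.mem_insert_self a _, ?_⟩
        intro b hb
        rcases Finset.mem_insert.mp hb with heq2 | hb
        · exact heq2 ▸ lexLt_irrefl a
        · exact fun hab => hmax b hb (lexLt_trans hma hab)

/-- Key Pommaret lemma: if `ε ∉ T` and `β + ε = α' + δ'` with `α' ∈ P` and `δ'`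
multiplicative for `α'`, then `δ' <ₗₑₓ β`. -/
lemma lexLt_of_decomp {T : Set (Exp n)} {P : Finset (Exp n)}
    (hT : IsMonomialIdeal T) (hP : IsPommaretBasis P T)
    {α' δ' β ε : Exp n} (hα' : α' ∈ P) (hmul : multExp α' δ')
    (hε : ε ∉ T) (heq : β + ε = α' + δ') : lexLt δ' β := by
  have hα'T : α' ∈ T := (hP.1 α').mpr ⟨α', hα', 0, fun i hi => by simp at hi, (add_zero α').symm⟩
  rcases lexLt_trichot δ' β with rfl | h | h
  · exfalso
    have : ε = α' := by
      have : δ' + ε = δ' + α' := by rw [heq]; exact add_comm _ _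
      exact add_left_cancel this
    exact hε (this ▸ hα'T)
  · exact h
  · exfalso
    obtain ⟨i, hib, habove⟩ := h
    have key : ∀ j, β j + ε j = α' j + δ' j := by
      intro j
      have := DFunLike.congr_fun heq j
      simpa [Finsupp.add_apply] using this
    have hi_supp : i ∈ δ'.support := Finsupp.mem_support_iff.mpr (by omega)
    have hmulti := hmul i hi_supp
    have hle : α' ≤ ε := by
      rw [Finsupp.le_def]
      intro j
      rcases lt_trichotomy j i with hj | rfl | hj
      · have h0 : α' j = 0 := by
          by_contra h0
          exact absurd (hmulti j (Finsupp.mem_support_iff.mpr h0)) (not_le.mpr hj)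
        omega
      · have := key j; omega
      · have h1 := habove j hj
        have h2 := key j
        omega
    have : ε ∈ T := by
      have := hT α' hα'T (ε - α')
      rwa [add_tsub_cancel_of_le hle] at this
    exact hε this

end Aux

/-- Lemma `zerosyz`: a syzygy of a `P(J)`-marked basis all of whose
coefficients involve only multiplicative variables is zero, and conversely. -/
theorem statement15 {n : ℕ} {A : Type*} [CommRing A] [IsNoetherianRing A]
    (T : Set (Exp n)) (P : Finset (Exp n))
    (hT : IsMonomialIdeal T) (hP : IsPommaretBasis P T)
    (g : Exp n → MvPolynomial (Fin (n+1)) A) (hG : IsMarkedBasisI T P g)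
    (c : Exp n → MvPolynomial (Fin (n+1)) A)
    (hsyz : ∑ α ∈ P, c α * g α = 0) :
    (∀ α ∈ P, multPoly α (c α)) ↔ ∀ α ∈ P, c α = 0 := by
  classical
  constructor
  · intro hmult
    by_contra hne
    push_neg at hne
    obtain ⟨α₁, hα₁, hc₁⟩ := hne
    set B : Finset (Exp n) := P.biUnion (fun α => (c α).support) with hB
    have hBne : B.Nonempty := by
      have h1 : (c α₁).support.Nonempty := by
        rw [Finset.nonempty_iff_ne_empty]
        intro h
        exact hc₁ (MvPolynomial.support_eq_empty.mp h)
      obtain ⟨β₁, hβ₁⟩ := h1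
      exact ⟨β₁, Finset.mem_biUnion.mpr ⟨α₁, hα₁, hβ₁⟩⟩
    obtain ⟨bs, hbsB, hbsmax⟩ := exists_lex_max B hBne
    obtain ⟨as, hasP, hbssupp⟩ := Finset.mem_biUnion.mp hbsB
    set γ : Exp n := as + bs with hγ
    have hγcone : γ ∈ pommaretCone as := ⟨bs, hmult as hasP bs hbssupp, rfl⟩
    have h0 : MvPolynomial.coeff γ (∑ α ∈ P, c α * g α) = 0 := by rw [hsyz]; simp
    rw [MvPolynomial.coeff_sum] at h0
    have htail : ∀ α ∈ P, MvPolynomial.coeff γ (c α * (g α - monomial α 1)) = 0 := by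
      intro α hα
      rw [MvPolynomial.coeff_mul]
      apply Finset.sum_eq_zero
      rintro ⟨β, ε⟩ hmem
      rw [Finset.HasAntidiagonal.mem_antidiagonal] at hmem
      by_cases hb : MvPolynomial.coeff β (c α) = 0
      · simp [hb]
      by_cases he : MvPolynomial.coeff ε (g α - monomial α 1) = 0
      · simp [he]
      exfalso
      have hεT : ε ∉ T :=
        (hG.1 α hα ε (MvPolynomial.mem_support_iff.mpr he)).1
      have hlex : lexLt bs β :=
        lexLt_of_decomp hT hP hasP (hmult as hasP bs hbssupp) hεT (by rw [hmem])
      have hβB : β ∈ B :=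
        Finset.mem_biUnion.mpr ⟨α, hα, MvPolynomial.mem_support_iff.mpr hb⟩
      exact hbsmax β hβB hlex
    have hhead : ∀ α ∈ P, MvPolynomial.coeff γ (c α * monomial α 1)
        = if α = as then MvPolynomial.coeff bs (c as) else 0 := by
      intro α hα
      rw [MvPolynomial.coeff_mul_monomial']
      by_cases haa : α = as
      · subst haa
        rw [if_pos rfl]
        have hle : α ≤ γ := hγ ▸ self_le_add_right α bs
        rw [if_pos hle]
        have h2 : γ - α = bs := by rw [hγ, add_tsub_cancel_left]
        rw [h2, mul_one]
      · rw [if_neg haa]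
        by_cases hle : α ≤ γ
        · rw [if_pos hle]
          suffices h : MvPolynomial.coeff (γ - α) (c α) = 0 by rw [h, zero_mul]
          by_contra hc0
          have hsupp : γ - α ∈ (c α).support := MvPolynomial.mem_support_iff.mpr hc0
          have hcone : γ ∈ pommaretCone α :=
            ⟨γ - α, hmult α hα _ hsupp, (add_tsub_cancel_of_le hle).symm⟩
          exact haa (hP.2 γ α hα as hasP hcone hγcone)
        · rw [if_neg hle]
    have hsum : (∑ α ∈ P, MvPolynomial.coeff γ (c α * g α))
        = MvPolynomial.coeff bs (c as) := by
      calc (∑ α ∈ P, MvPolynomial.coeff γ (c α * g α))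
          = ∑ α ∈ P, (MvPolynomial.coeff γ (c α * (g α - monomial α 1))
              + MvPolynomial.coeff γ (c α * monomial α 1)) := by
            apply Finset.sum_congr rfl
            intro α hα
            rw [← MvPolynomial.coeff_add, ← mul_add, sub_add_cancel]
        _ = ∑ α ∈ P, (if α = as then MvPolynomial.coeff bs (c as) else 0) := by
            apply Finset.sum_congr rfl
            intro α hα
            rw [htail α hα, hhead α hα, zero_add]
        _ = MvPolynomial.coeff bs (c as) := by
            rw [Finset.sum_ite_eq' P as (fun _ => MvPolynomial.coeff bs (c as)),
              if_pos hasP]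
    rw [hsum] at h0
    exact MvPolynomial.mem_support_iff.mp hbssupp h0
  · intro h α hα β hβ
    rw [h α hα] at hβ
    simp at hβ

end MB
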